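/- Suppose B is a barrier, S is an arbitrary set, and g : B² → S is a function such that for some function β assigning to each a ∈ B a finite subset β(a) ⊆ S, one has g(a ∪ b) ∈ β(a) for every a, b ∈ B with a ◁ b. Then there exist a sub-barrier C ⊆ B and a function ι : C → S such that g(a ∪ b) = ι(a) for every a, b ∈ C with a ◁ b. -/

import Mathlib

universe u v

open Set

/-- `r` is an initial segment of `X ⊆ ℕ`: `r ⊆ X` and every element of `X` not in `r`
is greater than every element of `r`. -/
def NatInitSeg (r : Finset ℕ) (X : Set ℕ) : Prop :=
  ↑r ⊆ X ∧ ∀ x ∈ X, x ∉ r → ∀ y ∈ r, y < x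

/-- `B` is a barrier: an infinite inclusion-antichain of finite subsets of `ℕ` such that
every infinite subset of the base has an initial segment in `B`. -/
def IsBarrier (B : Set (Finset ℕ)) : Prop :=
  B.Infinite ∧
  (∀ x ∈ B, ∀ y ∈ B, x ⊆ y → x = y) ∧
  (∀ X : Set ℕ, X ⊆ (⋃ b ∈ B, (↑b : Set ℕ)) → X.Infinite → ∃ r ∈ B, NatInitSeg r X)

/-- `t` is a proper initial segment of the finite set `s`. -/
def FinsetProperInitSeg (t s : Finset ℕ) : Prop :=
  t ⊆ s ∧ t ≠ s ∧ ∀ x ∈ s, x ∉ t → ∀ y ∈ t, y < x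

/-- The shift-extension relation `r ◁ s`: `min r < min s` and `r \ {min r}` is a proper
initial segment of `s`. -/
def ShiftExt (r s : Finset ℕ) : Prop :=
  ∃ m ∈ r, (∀ x ∈ r, m ≤ x) ∧ (∀ y ∈ s, m < y) ∧ FinsetProperInitSeg (r.erase m) s

/-- A map `f` from a barrier `B` into `X` is good for the relation `le`. -/
def GoodOn {X : Type*} (le : X → X → Prop) (B : Set (Finset ℕ)) (f : Finset ℕ → X) : Prop :=
  ∃ s ∈ B, ∃ t ∈ B, ShiftExt s t ∧ le (f s) (f t)

/-- Well quasi-order for a relation: every `ℕ`-sequence is good. -/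
def IsWqoRel {X : Type*} (le : X → X → Prop) : Prop :=
  ∀ p : ℕ → X, ∃ i j : ℕ, i < j ∧ le (p i) (p j)

/-- Better quasi-order: every map from every barrier is good. -/
def IsBqoRel {X : Type*} (le : X → X → Prop) : Prop :=
  ∀ B : Set (Finset ℕ), IsBarrier B → ∀ f : Finset ℕ → X, GoodOn le B f

/-- The (strict) lexicographic order on finite subsets of `ℕ`:
`r < s` iff `r ≠ s` and the least element of the symmetric difference belongs to `r`. -/
def FinsetLexLt (r s : Finset ℕ) : Prop :=
  r ≠ s ∧ ∀ m ∈ symmDiff r s, (∀ x ∈ symmDiff r s, m ≤ x) → m ∈ r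

/-- The barrier `B` has lexicographic order type `≤ α`: there is a lex-strictly-increasing
ordinal-valued function on `B` bounded by `α`. -/
def BarrierTypeLE (B : Set (Finset ℕ)) (α : Ordinal.{0}) : Prop :=
  ∃ g : Finset ℕ → Ordinal.{0}, (∀ b ∈ B, g b < α) ∧
    ∀ b₁ ∈ B, ∀ b₂ ∈ B, FinsetLexLt b₁ b₂ → g b₁ < g b₂

/-- `α`-wqo: every map from a barrier of order type `≤ α` is good. -/
def IsAlphaWqoRel {X : Type*} (le : X → X → Prop) (α : Ordinal.{0}) : Prop :=
  ∀ B : Set (Finset ℕ), IsBarrier B → BarrierTypeLE B α →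
    ∀ f : Finset ℕ → X, GoodOn le B f

/-- `σ`-bqo: a wqo which is a countable union of sets, each bqo in the induced order. -/
def IsSigmaBqoRel {X : Type*} (le : X → X → Prop) : Prop :=
  IsWqoRel le ∧
  ∃ S : ℕ → Set X, (⋃ n, S n) = Set.univ ∧
    ∀ n, IsBqoRel (fun x y : S n => le x.1 y.1)

/-- Sequences of length `α` from `P`. -/
abbrev OrdSeq (P : Type u) (α : Ordinal.{0}) := {β : Ordinal.{0} // β < α} → P

/-- The embeddability quasi-order on `P^α`. -/
def OrdSeqLE {P : Type u} [Preorder P] {α : Ordinal.{0}} (f g : OrdSeq P α) : Prop :=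
  ∃ ρ : {β : Ordinal.{0} // β < α} → {β : Ordinal.{0} // β < α},
    StrictMono ρ ∧ ∀ γ, f γ ≤ g (ρ γ)

/-- Sequences of length `< α` from `P`. -/
abbrev OrdSeqLt (P : Type u) (α : Ordinal.{0}) :=
  Σ β : {β : Ordinal.{0} // β < α}, ({γ : Ordinal.{0} // γ < β.1} → P)

/-- The embeddability quasi-order on `P^{<α}`. -/
def OrdSeqLtLE {P : Type u} [Preorder P] {α : Ordinal.{0}} (f g : OrdSeqLt P α) : Prop :=
  ∃ ρ : {γ : Ordinal.{0} // γ < f.1.1} → {γ : Ordinal.{0} // γ < g.1.1},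
    StrictMono ρ ∧ ∀ δ, f.2 δ ≤ g.2 (ρ δ)

/-- The Dress–Schiffels relation: `f ≤DS g` iff `f i < g i` for every `i` maximal in
`Δ(f,g) = {j | f j ≠ g j}`. -/
def DSle {I : Type u} [PartialOrder I] {P : I → Type v} [∀ i, PartialOrder (P i)]
    (f g : ∀ i, P i) : Prop :=
  ∀ i : I, Maximal (fun j => f j ≠ g j) i → f i < g i

/-- The underlying set of the Dress–Schiffels product: finitely supported functions. -/
abbrev DSProd (I : Type u) [PartialOrder I] (P : I → Type v) [∀ i, PartialOrder (P i)]
    [∀ i, OrderBot (P i)] :=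
  {f : ∀ i, P i // {i | f i ≠ ⊥}.Finite}



private def Rrel (D : Set (Finset ℕ)) (Y : Set ℕ) : Finset ℕ → Finset ℕ → Prop :=
  fun s' s => ↑s ⊆ Y ∧ (¬ ∃ d ∈ D, d ⊆ s) ∧ ∃ n ∈ Y, n ∉ s ∧ s' = insert n s

private lemma finset_subset_iUnion {g : ℕ → Finset ℕ} (hg : Monotone g) (d : Finset ℕ)
    (hd : ↑d ⊆ ⋃ k, ((g k : Finset ℕ) : Set ℕ)) : ∃ k, d ⊆ g k := by
  classical
  induction d using Finset.induction_on with
  | empty => exact ⟨0, Finset.empty_subset _⟩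
  | @insert x d hx ih =>
    have hx' : (x : ℕ) ∈ ⋃ k, ((g k : Finset ℕ) : Set ℕ) := hd (by simp)
    obtain ⟨k₁, hk₁⟩ := Set.mem_iUnion.1 hx'
    obtain ⟨k₂, hk₂⟩ := ih (fun y hy => hd (by simp only [Finset.coe_insert, Set.mem_insert_iff]; right; exact hy))
    refine ⟨max k₁ k₂, Finset.insert_subset (hg (le_max_left _ _) hk₁) (hk₂.trans (hg (le_max_right _ _)))⟩

private lemma wfR (D : Set (Finset ℕ)) (Y : Set ℕ)
    (hbar : ∀ Z : Set ℕ, Z ⊆ Y → Z.Infinite → ∃ d ∈ D, ↑d ⊆ Z) :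
    WellFounded (Rrel D Y) := by
  by_contra hwf
  have h1 : ∃ s, ¬ Acc (Rrel D Y) s := by
    by_contra hc; push_neg at hc; exact hwf ⟨hc⟩
  have h2 : ∀ s : {s : Finset ℕ // ¬ Acc (Rrel D Y) s},
      ∃ t : {s : Finset ℕ // ¬ Acc (Rrel D Y) s}, Rrel D Y ↑t ↑s := by
    rintro ⟨s, hs⟩
    by_contra hc; push_neg at hc
    refine hs (Acc.intro s fun t ht => ?_)
    by_contra hA
    exact hc ⟨t, hA⟩ ht
  choose stp hstp using h2
  obtain ⟨s₀, hs₀⟩ := h1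
  set f : ℕ → {s : Finset ℕ // ¬ Acc (Rrel D Y) s} :=
    fun k => Nat.rec ⟨s₀, hs₀⟩ (fun _ p => stp p) k with hf
  have hR : ∀ k, Rrel D Y ↑(f (k+1)) ↑(f k) := fun k => hstp (f k)
  have hstep : ∀ k, (f k : Finset ℕ) ⊆ (f (k+1) : Finset ℕ) ∧
      ((f (k+1) : Finset ℕ)).card = ((f k : Finset ℕ)).card + 1 := by
    intro k
    obtain ⟨-, -, n, -, hns, he⟩ := hR k
    constructor
    · rw [he]; exact Finset.subset_insert _ _
    · rw [he, Finset.card_insert_of_notMem hns]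
  have hmono : Monotone fun k => (f k : Finset ℕ) := monotone_nat_of_le_succ fun k => (hstep k).1
  have hcard : ∀ k, k ≤ ((f k : Finset ℕ)).card := by
    intro k; induction k with
    | zero => exact Nat.zero_le _
    | succ k ih => rw [(hstep k).2]; omega
  have hXsub : (⋃ k, (((f k : Finset ℕ) : Finset ℕ) : Set ℕ)) ⊆ Y :=
    Set.iUnion_subset fun k => (hR k).1
  have hXinf : (⋃ k, (((f k : Finset ℕ) : Finset ℕ) : Set ℕ)).Infinite := by
    by_contra hfin
    rw [Set.not_infinite] at hfin
    have hsubk : ∀ k, (f k : Finset ℕ) ⊆ hfin.toFinset := by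
      intro k x hx
      rw [Set.Finite.mem_toFinset]
      exact Set.mem_iUnion.2 ⟨k, hx⟩
    have h1 := Finset.card_le_card (hsubk (hfin.toFinset.card + 1))
    have h2 := hcard (hfin.toFinset.card + 1)
    omega
  obtain ⟨d, hdD, hdX⟩ := hbar _ hXsub hXinf
  obtain ⟨k, hk⟩ := finset_subset_iUnion hmono d hdX
  exact (hR k).2.1 ⟨d, hdD, hk⟩

private lemma pigeon {S : Type u} (F : Set S) (hF : F.Finite) (kv : ℕ → S)
    (h : ∀ k, kv k ∈ F) : ∃ w ∈ F, {k | kv k = w}.Infinite := by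
  by_contra hc; push_neg at hc
  have hfin : (Set.univ : Set ℕ).Finite := by
    have hsub : (Set.univ : Set ℕ) ⊆ ⋃ w ∈ F, {k | kv k = w} :=
      fun k _ => Set.mem_biUnion (h k) rfl
    exact (Set.Finite.biUnion hF fun w hw => (hc w hw)).subset hsub
  exact Set.infinite_univ hfin
private lemma stab {S : Type u} (D : Set (Finset ℕ)) (Y : Set ℕ)
    (hanti : ∀ x ∈ D, ∀ y ∈ D, x ⊆ y → x = y)
    (hbar : ∀ Z : Set ℕ, Z ⊆ Y → Z.Infinite → ∃ d ∈ D, ↑d ⊆ Z)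
    (h : Finset ℕ → S) (F : Set S) (hF : F.Finite) (hFne : F.Nonempty) :
    ∀ s : Finset ℕ, ↑s ⊆ Y →
      ∀ N : Set ℕ, N.Infinite → N ⊆ Y → Disjoint (↑s : Set ℕ) N →
      (∀ c : Finset ℕ, ↑c ⊆ N → s ∪ c ∈ D → h (s ∪ c) ∈ F) →
      ∃ N', N' ⊆ N ∧ N'.Infinite ∧ ∃ v ∈ F,
        ∀ c : Finset ℕ, ↑c ⊆ N' → s ∪ c ∈ D → h (s ∪ c) = v := by
  intro s
  induction s using (wfR D Y hbar).induction with
  | _ s IH =>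
  intro hsY N hN hNY hdisj hhF
  by_cases hA : ∃ d ∈ D, d ⊆ s
  · by_cases hsD : s ∈ D
    · refine ⟨N, Set.Subset.rfl, hN, h s, ?_, ?_⟩
      · have := hhF ∅ (by simp) (by simpa using hsD)
        simpa using this
      · intro c hc hcD
        have he : s = s ∪ c := hanti s hsD (s ∪ c) hcD Finset.subset_union_left
        rw [← he]
    · refine ⟨N, Set.Subset.rfl, hN, hFne.choose, hFne.choose_spec, ?_⟩
      intro c hc hcD
      obtain ⟨d, hdD, hds⟩ := hA
      have h1 : d = s ∪ c := hanti d hdD _ hcD (hds.trans Finset.subset_union_left)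
      have h2 : s ∪ c = s := Finset.Subset.antisymm (h1 ▸ hds) Finset.subset_union_left
      exact absurd (h2 ▸ hcD) hsD
  · -- fusion
    have key : ∀ T : {T : Set ℕ // T.Infinite ∧ T ⊆ N},
        ∃ T' : {T : Set ℕ // T.Infinite ∧ T ⊆ N}, ∃ v, v ∈ F ∧
          (↑T' : Set ℕ) ⊆ Set.Ioi (sInf (↑T : Set ℕ)) ∧ (↑T' : Set ℕ) ⊆ (↑T : Set ℕ) ∧
          ∀ c : Finset ℕ, ↑c ⊆ (↑T' : Set ℕ) →
            insert (sInf (↑T : Set ℕ)) s ∪ c ∈ D →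
            h (insert (sInf (↑T : Set ℕ)) s ∪ c) = v := by
      rintro ⟨T, hTinf, hTN⟩
      set n := sInf T with hn
      have hnT : n ∈ T := Nat.sInf_mem hTinf.nonempty
      have hnN : n ∈ N := hTN hnT
      have hns : n ∉ s := fun hmem => Set.disjoint_left.1 hdisj hmem hnN
      have hrel : Rrel D Y (insert n s) s := ⟨hsY, hA, n, hNY hnN, hns, rfl⟩
      have hT2 : (T ∩ Set.Ioi n).Infinite := by
        refine ((hTinf.diff (Set.finite_Iic n)).mono ?_)
        intro x hx
        simp only [Set.mem_diff, Set.mem_Iic, not_le] at hx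
        exact ⟨hx.1, hx.2⟩
      have hcY : (↑(insert n s) : Set ℕ) ⊆ Y := by
        rw [Finset.coe_insert]
        exact Set.insert_subset (hNY hnN) hsY
      have hdisj2 : Disjoint (↑(insert n s) : Set ℕ) (T ∩ Set.Ioi n) := by
        rw [Finset.coe_insert]
        refine Set.disjoint_left.2 ?_
        intro x hx hx2
        rcases hx with rfl | hx
        · exact lt_irrefl _ (Set.mem_Ioi.1 hx2.2)
        · exact Set.disjoint_left.1 hdisj hx (hTN hx2.1)
      have htrans : ∀ c : Finset ℕ, ↑c ⊆ T ∩ Set.Ioi n → insert n s ∪ c ∈ D →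
          h (insert n s ∪ c) ∈ F := by
        intro c hc hcD
        have he : insert n s ∪ c = s ∪ insert n c := by
          rw [Finset.insert_union, Finset.union_insert]
        have hsubN : (↑(insert n c) : Set ℕ) ⊆ N := by
          rw [Finset.coe_insert]
          exact Set.insert_subset hnN (fun x hx => hTN (hc hx).1)
        rw [he]
        exact hhF _ hsubN (he ▸ hcD)
      obtain ⟨N', hN'sub, hN'inf, v, hvF, hv⟩ :=
        IH (insert n s) hrel hcY (T ∩ Set.Ioi n) hT2
          (fun x hx => hTN hx.1 |> hNY) hdisj2 htrans
      refine ⟨⟨N', hN'inf, fun x hx => hTN (hN'sub hx).1⟩, v, hvF,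
        fun x hx => (hN'sub hx).2, fun x hx => (hN'sub hx).1, ?_⟩
      intro c hc hcD
      exact hv c hc hcD
    choose stp v hvF hIoi hsub hprop using key
    set f : ℕ → {T : Set ℕ // T.Infinite ∧ T ⊆ N} :=
      fun k => Nat.rec ⟨N, hN, Set.Subset.rfl⟩ (fun _ p => stp p) k with hfdef
    have hfs : ∀ k, f (k+1) = stp (f k) := fun k => rfl
    set m : ℕ → ℕ := fun k => sInf (↑(f k) : Set ℕ) with hm
    have hmem : ∀ k, m k ∈ (↑(f k) : Set ℕ) := fun k => Nat.sInf_mem (f k).2.1.nonempty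
    have hstepsub : ∀ k, (↑(f (k+1)) : Set ℕ) ⊆ (↑(f k) : Set ℕ) := fun k => hsub (f k)
    have hstepIoi : ∀ k, (↑(f (k+1)) : Set ℕ) ⊆ Set.Ioi (m k) := fun k => hIoi (f k)
    have hmono : ∀ {k j}, k ≤ j → (↑(f j) : Set ℕ) ⊆ (↑(f k) : Set ℕ) := by
      intro k j hkj
      induction j with
      | zero => rw [Nat.le_zero.1 hkj]
      | succ j ih =>
        rcases Nat.lt_or_ge k (j+1) with hlt | hge
        · exact (hstepsub j).trans (ih (Nat.lt_succ_iff.1 hlt))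
        · rw [Nat.le_antisymm hkj hge]
    have hmlt : StrictMono m := by
      refine strictMono_nat_of_lt_succ fun k => ?_
      exact hstepIoi k (hmem (k+1))
    obtain ⟨w, hwF, hK⟩ := pigeon F hF (fun k => v (f k)) (fun k => hvF (f k))
    refine ⟨m '' {k | v (f k) = w}, ?_, ?_, w, hwF, ?_⟩
    · rintro x ⟨k, -, rfl⟩
      exact (f k).2.2 (hmem k)
    · exact hK.image (hmlt.injective.injOn)
    · intro c hc hcD
      rcases Finset.eq_empty_or_nonempty c with rfl | hcne
      · exact absurd ⟨s, by simpa using hcD, Finset.Subset.rfl⟩ hA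
      · set x := c.min' hcne with hx
        obtain ⟨k, hkK, hkx⟩ := hc (c.min'_mem hcne)
        have hce : (↑(c.erase x) : Set ℕ) ⊆ (↑(f (k+1)) : Set ℕ) := by
          intro y hy
          rw [Finset.coe_erase] at hy
          obtain ⟨j, -, hj⟩ := hc hy.1
          have hxy : x < y := lt_of_le_of_ne (c.min'_le y hy.1) (Ne.symm hy.2)
          have hkj : k < j := hmlt.lt_iff_lt.1 (by rw [hj, hkx]; exact hxy)
          exact hmono hkj (hj ▸ hmem j)
        have hre : insert (m k) s ∪ c.erase x = s ∪ c := by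
          rw [Finset.insert_union, ← Finset.union_insert, hkx, hx, Finset.insert_erase (c.min'_mem hcne)]
        have := hprop (f k) (c.erase x) hce (by rw [hre]; exact hcD)
        rw [hre] at this
        rw [this, hkK]
/-- The choice lemma for barriers: if `g` on `B²` takes values in a finite set `β(a)`
depending only on the first component `a`, then on some sub-barrier `C ⊆ B` the value
`g(a ∪ b)` depends only on `a`. -/
theorem stmt_19 {S : Type u} (B : Set (Finset ℕ)) (hB : IsBarrier B)
    (g : Finset ℕ → S) (β : Finset ℕ → Set S)
    (hβfin : ∀ a ∈ B, (β a).Finite)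
    (hg : ∀ a ∈ B, ∀ b ∈ B, ShiftExt a b → g (a ∪ b) ∈ β a) :
    ∃ C ⊆ B, IsBarrier C ∧ ∃ ι : Finset ℕ → S,
      ∀ a ∈ C, ∀ b ∈ C, ShiftExt a b → g (a ∪ b) = ι a := by
  classical
  obtain ⟨hBinf, hanti, hcov⟩ := hB
  set Y : Set ℕ := ⋃ b ∈ B, (↑b : Set ℕ) with hYdef
  have hbY : ∀ b ∈ B, (↑b : Set ℕ) ⊆ Y := fun b hb x hx => Set.mem_biUnion hb hx
  have hbar : ∀ Z : Set ℕ, Z ⊆ Y → Z.Infinite → ∃ d ∈ B, ↑d ⊆ Z := by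
    intro Z hZY hZinf
    obtain ⟨r, hr, hseg⟩ := hcov Z hZY hZinf
    exact ⟨r, hr, hseg.1⟩
  have hne0 : ∅ ∉ B := by
    intro h0
    refine hBinf ((Set.finite_singleton ∅).subset fun b hb => ?_)
    exact Set.mem_singleton_iff.2 (hanti ∅ h0 b hb (Finset.empty_subset b)).symm
  have hBne : ∀ b ∈ B, b.Nonempty := by
    intro b hb
    rcases Finset.eq_empty_or_nonempty b with rfl | h
    · exact absurd hb hne0
    · exact h
  have hYinf : Y.Infinite := by
    by_contra hfin
    rw [Set.not_infinite] at hfin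
    refine hBinf (((hfin.toFinset.powerset).finite_toSet).subset fun b hb => ?_)
    rw [Finset.mem_coe, Finset.mem_powerset]
    intro x hx
    rw [Set.Finite.mem_toFinset]
    exact hbY b hb hx
  -- every element of b \ a is above all of a, for a ◁ b
  have hgtall : ∀ a b : Finset ℕ, ShiftExt a b → ∀ x ∈ b, x ∉ a → ∀ y ∈ a, y < x := by
    rintro a b ⟨mm, hmm, hmin, hgtb, hsub, hne, hlt⟩ x hxb hxa y hy
    rcases eq_or_ne y mm with rfl | hymm
    · exact hgtb x hxb
    · exact hlt x hxb (fun hc => hxa (Finset.mem_of_mem_erase hc)) y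
        (Finset.mem_erase.2 ⟨hymm, hy⟩)
  -- decomposition of a ◁ b
  have hdecomp : ∀ (a b : Finset ℕ) (ha : a.Nonempty), ShiftExt a b →
      a.erase (a.min' ha) ∪ (b \ a) = b := by
    rintro a b ha ⟨mm, hmm, hmin, hgtb, hsub, hne, hlt⟩
    have hmmeq : mm = a.min' ha :=
      le_antisymm (hmin _ (a.min'_mem ha)) (a.min'_le mm hmm)
    rw [← hmmeq]
    apply Finset.Subset.antisymm
    · exact Finset.union_subset hsub Finset.sdiff_subset
    · intro x hxb
      by_cases hxa : x ∈ a
      · have hxmm : x ≠ mm := fun hc => lt_irrefl x (by nth_rewrite 1 [hc]; exact hgtb x hxb)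
        exact Finset.mem_union_left _ (Finset.mem_erase.2 ⟨hxmm, hxa⟩)
      · exact Finset.mem_union_right _ (Finset.mem_sdiff.2 ⟨hxb, hxa⟩)
  -- construction of a ◁ (a.erase min ∪ c)
  have hmk : ∀ (a : Finset ℕ) (ha : a.Nonempty) (c : Finset ℕ), c.Nonempty →
      (∀ x ∈ c, ∀ y ∈ a, y < x) → ShiftExt a (a.erase (a.min' ha) ∪ c) := by
    intro a ha c hcne hgt
    refine ⟨a.min' ha, a.min'_mem ha, fun x hx => a.min'_le x hx, ?_, ?_, ?_, ?_⟩
    · intro y hy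
      rcases Finset.mem_union.1 hy with hy | hy
      · have h1 := Finset.mem_erase.1 hy
        exact lt_of_le_of_ne (a.min'_le y h1.2) (Ne.symm h1.1)
      · exact hgt y hy _ (a.min'_mem ha)
    · exact Finset.subset_union_left
    · obtain ⟨x, hx⟩ := hcne
      intro hc
      have hxe : x ∈ a.erase (a.min' ha) := hc ▸ Finset.mem_union_right _ hx
      exact lt_irrefl x (hgt x hx x (Finset.mem_of_mem_erase hxe))
    · intro x hx hxe y hy
      rcases Finset.mem_union.1 hx with hx' | hx'
      · exact absurd hx' hxe
      · exact hgt x hx' y (Finset.mem_of_mem_erase hy)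
  -- stabilize finitely many `a`s at once
  have multi : ∀ A : Finset (Finset ℕ), ∀ T : Set ℕ, T.Infinite → T ⊆ Y →
      (∀ a ∈ A, a ∈ B) → (∀ a ∈ A, ∀ n ∈ T, ∀ x ∈ a, x < n) →
      ∃ T', T' ⊆ T ∧ T'.Infinite ∧
        ∀ a ∈ A, ∃ v : S, ∀ b ∈ B, ShiftExt a b → (↑(b \ a) : Set ℕ) ⊆ T' →
          g (a ∪ b) = v := by
    intro A
    induction A using Finset.induction_on with
    | empty => intro T hT hTY _ _; exact ⟨T, Set.Subset.rfl, hT, by simp⟩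
    | @insert a A ha ih =>
      intro T hT hTY hmem hgt
      have haB : a ∈ B := hmem a (Finset.mem_insert_self a A)
      have hane : a.Nonempty := hBne a haB
      have hsY : (↑(a.erase (a.min' hane)) : Set ℕ) ⊆ Y :=
        fun x hx => hbY a haB (Finset.mem_coe.2 (Finset.mem_of_mem_erase (Finset.mem_coe.1 hx)))
      have hdisjT : Disjoint (↑(a.erase (a.min' hane)) : Set ℕ) T := by
        refine Set.disjoint_left.2 fun x hx hxT => ?_
        exact lt_irrefl x (hgt a (Finset.mem_insert_self _ _) x hxT x
          (Finset.mem_of_mem_erase (Finset.mem_coe.1 hx)))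
      have hhF : ∀ c : Finset ℕ, ↑c ⊆ T → a.erase (a.min' hane) ∪ c ∈ B →
          g (a ∪ (a.erase (a.min' hane) ∪ c)) ∈ insert (g ∅) (β a) := by
        intro c hc hcB
        rcases Finset.eq_empty_or_nonempty c with rfl | hcne
        · exfalso
          rw [Finset.union_empty] at hcB
          have h2 : a.erase (a.min' hane) = a := hanti _ hcB a haB (Finset.erase_subset _ _)
          have h3 : a.min' hane ∈ a.erase (a.min' hane) := by
            rw [h2]; exact a.min'_mem hane
          exact Finset.notMem_erase _ _ h3
        · have hse : ShiftExt a (a.erase (a.min' hane) ∪ c) :=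
            hmk a hane c hcne (fun x hx y hy =>
              hgt a (Finset.mem_insert_self _ _) x (hc hx) y hy)
          exact Set.mem_insert_of_mem _ (hg a haB _ hcB hse)
      obtain ⟨T₁, hT₁T, hT₁inf, v, hvF, hv⟩ :=
        stab B Y hanti hbar (fun d => g (a ∪ d)) (insert (g ∅) (β a))
          ((hβfin a haB).insert _) (Set.insert_nonempty _ _) (a.erase (a.min' hane))
          hsY T hT hTY hdisjT hhF
      obtain ⟨T', hT'sub, hT'inf, hT'⟩ := ih T₁ hT₁inf (hT₁T.trans hTY)
        (fun a' ha' => hmem a' (Finset.mem_insert_of_mem ha'))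
        (fun a' ha' n hn => hgt a' (Finset.mem_insert_of_mem ha') n (hT₁T hn))
      refine ⟨T', hT'sub.trans hT₁T, hT'inf, ?_⟩
      intro a' ha'
      rcases Finset.mem_insert.1 ha' with rfl | ha'
      · refine ⟨v, fun b hb hse hbT' => ?_⟩
        have hab : a'.erase (a'.min' hane) ∪ (b \ a') = b := hdecomp a' b hane hse
        have h5 := hv (b \ a') (fun x hx => hT'sub (hbT' hx)) (by rw [hab]; exact hb)
        rw [hab] at h5
        exact h5
      · exact hT' a' ha'
  -- the fusion step
  have key2 : ∀ p : {p : Finset ℕ × Set ℕ //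
        p.2.Infinite ∧ p.2 ⊆ Y ∧ ∀ n ∈ p.2, ∀ x ∈ p.1, x < n},
      ∃ q : {p : Finset ℕ × Set ℕ //
        p.2.Infinite ∧ p.2 ⊆ Y ∧ ∀ n ∈ p.2, ∀ x ∈ p.1, x < n},
        (q : Finset ℕ × Set ℕ).2 ⊆ (p : Finset ℕ × Set ℕ).2 ∩
            Set.Ioi (sInf (p : Finset ℕ × Set ℕ).2) ∧
        (q : Finset ℕ × Set ℕ).1 = insert (sInf (p : Finset ℕ × Set ℕ).2)
            (p : Finset ℕ × Set ℕ).1 ∧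
        ∀ a ∈ B, a ⊆ (q : Finset ℕ × Set ℕ).1 → ∃ v : S, ∀ b ∈ B, ShiftExt a b →
          (↑(b \ a) : Set ℕ) ⊆ (q : Finset ℕ × Set ℕ).2 → g (a ∪ b) = v := by
    rintro ⟨⟨E, T⟩, hTinf, hTY, hET⟩
    have hnT : sInf T ∈ T := Nat.sInf_mem hTinf.nonempty
    have hT2 : (T ∩ Set.Ioi (sInf T)).Infinite := by
      refine (hTinf.diff (Set.finite_Iic (sInf T))).mono ?_
      intro x hx
      simp only [Set.mem_diff, Set.mem_Iic, not_le] at hx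
      exact ⟨hx.1, hx.2⟩
    have hAfin : {a : Finset ℕ | a ∈ B ∧ a ⊆ insert (sInf T) E}.Finite := by
      refine Set.Finite.subset ((insert (sInf T) E).powerset).finite_toSet ?_
      intro a haA
      rw [Finset.mem_coe, Finset.mem_powerset]
      exact haA.2
    obtain ⟨T', hT'sub, hT'inf, hT'⟩ := multi hAfin.toFinset (T ∩ Set.Ioi (sInf T)) hT2
      (fun x hx => hTY hx.1)
      (fun a haA => (hAfin.mem_toFinset.1 haA).1)
      (by
        intro a haA n hn x hx
        have h6 := (hAfin.mem_toFinset.1 haA).2 hx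
        rcases Finset.mem_insert.1 h6 with rfl | h7
        · exact hn.2
        · exact hET n hn.1 x h7)
    refine ⟨⟨(insert (sInf T) E, T'), hT'inf, fun x hx => hTY (hT'sub hx).1, ?_⟩,
      hT'sub, rfl, ?_⟩
    · intro n hn x hx
      rcases Finset.mem_insert.1 hx with rfl | hx'
      · exact (hT'sub hn).2
      · exact hET n (hT'sub hn).1 x hx'
    · intro a haB hasub
      exact hT' a (hAfin.mem_toFinset.2 ⟨haB, hasub⟩)
  choose stq hq1 hq2 hq3 using key2
  set St : ℕ → {p : Finset ℕ × Set ℕ //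
      p.2.Infinite ∧ p.2 ⊆ Y ∧ ∀ n ∈ p.2, ∀ x ∈ p.1, x < n} :=
    fun k => Nat.rec ⟨(∅, Y), hYinf, Set.Subset.rfl, by simp⟩ (fun _ p => stq p) k with hSt
  set m : ℕ → ℕ := fun k => sInf (St k : Finset ℕ × Set ℕ).2 with hmdef
  have hmemk : ∀ k, m k ∈ (St k : Finset ℕ × Set ℕ).2 :=
    fun k => Nat.sInf_mem (St k).2.1.nonempty
  have hq1' : ∀ k, (St (k+1) : Finset ℕ × Set ℕ).2 ⊆
      (St k : Finset ℕ × Set ℕ).2 ∩ Set.Ioi (m k) := fun k => hq1 (St k)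
  have hE : ∀ k, (St (k+1) : Finset ℕ × Set ℕ).1 =
      insert (m k) (St k : Finset ℕ × Set ℕ).1 := fun k => hq2 (St k)
  have hmono2 : ∀ k j, k ≤ j → (St j : Finset ℕ × Set ℕ).2 ⊆
      (St k : Finset ℕ × Set ℕ).2 := by
    intro k j hkj
    induction j with
    | zero => rw [Nat.le_zero.1 hkj]
    | succ j ih =>
      rcases Nat.lt_or_ge k (j+1) with hlt | hge
      · exact Set.Subset.trans (fun x hx => (hq1' j hx).1) (ih (Nat.lt_succ_iff.1 hlt))
      · rw [Nat.le_antisymm hkj hge]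
  have hmlt : StrictMono m :=
    strictMono_nat_of_lt_succ fun k => (hq1' k (hmemk (k+1))).2
  have hEmem : ∀ j k, j < k → m j ∈ (St k : Finset ℕ × Set ℕ).1 := by
    intro j k
    induction k with
    | zero => omega
    | succ k ih =>
      intro hjk
      rw [hE k]
      rcases Nat.lt_or_ge j k with h | h
      · exact Finset.mem_insert_of_mem (ih h)
      · have : j = k := by omega
        rw [this]; exact Finset.mem_insert_self _ _
  set M : Set ℕ := Set.range m with hMdef
  have hMY : M ⊆ Y := by
    rintro x ⟨k, rfl⟩
    exact (St k).2.2.1 (hmemk k)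
  have hMinf : M.Infinite := Set.infinite_range_of_injective hmlt.injective
  set C : Set (Finset ℕ) := {b | b ∈ B ∧ (↑b : Set ℕ) ⊆ M} with hCdef
  have hCB : C ⊆ B := fun b hb => hb.1
  have hCinf : C.Infinite := by
    by_contra hCfin
    rw [Set.not_infinite] at hCfin
    have hUfin : (⋃ b ∈ C, (↑b : Set ℕ)).Finite :=
      hCfin.biUnion fun b _ => b.finite_toSet
    obtain ⟨K, hK⟩ := hUfin.bddAbove
    have hXinf : (M ∩ Set.Ioi K).Infinite := by
      refine (hMinf.diff (Set.finite_Iic K)).mono ?_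
      intro x hx
      simp only [Set.mem_diff, Set.mem_Iic, not_le] at hx
      exact ⟨hx.1, hx.2⟩
    obtain ⟨d, hdB, hdX⟩ := hbar (M ∩ Set.Ioi K) (fun x hx => hMY hx.1) hXinf
    have hdC : d ∈ C := ⟨hdB, fun x hx => (hdX hx).1⟩
    obtain ⟨y, hy⟩ := hBne d hdB
    have h8 : y ≤ K := hK (Set.mem_biUnion hdC (Finset.mem_coe.2 hy))
    have h9 : K < y := (hdX (Finset.mem_coe.2 hy)).2
    omega
  have hCbarrier : IsBarrier C := by
    refine ⟨hCinf, fun x hx y hy hxy => hanti x hx.1 y hy.1 hxy, ?_⟩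
    intro X hX hXinf
    have hXM : X ⊆ M := by
      intro x hx
      obtain ⟨b, hb, hxb⟩ := Set.mem_iUnion₂.1 (hX hx)
      exact hb.2 hxb
    obtain ⟨r, hr, hseg⟩ := hcov X (hXM.trans hMY) hXinf
    exact ⟨r, ⟨hr, (hseg.1).trans hXM⟩, hseg⟩
  have hkey : ∀ a ∈ C, ∃ v : S, ∀ b ∈ C, ShiftExt a b → g (a ∪ b) = v := by
    rintro a ⟨haB, haM⟩
    have hane := hBne a haB
    obtain ⟨k, hk⟩ := haM (Finset.mem_coe.2 (a.max'_mem hane))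
    have hsubE : a ⊆ (St (k+1) : Finset ℕ × Set ℕ).1 := by
      intro x hx
      obtain ⟨j, hj⟩ := haM (Finset.mem_coe.2 hx)
      have hle : x ≤ a.max' hane := a.le_max' x hx
      have hjk : j ≤ k := hmlt.le_iff_le.1 (by rw [hj, hk]; exact hle)
      rw [← hj]
      exact hEmem j (k+1) (by omega)
    obtain ⟨v, hv⟩ := hq3 (St k) a haB hsubE
    refine ⟨v, ?_⟩
    rintro b ⟨hbB, hbM⟩ hse
    refine hv b hbB hse ?_
    intro x hx
    have hxb : x ∈ b := (Finset.mem_sdiff.1 (Finset.mem_coe.1 hx)).1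
    have hxa : x ∉ a := (Finset.mem_sdiff.1 (Finset.mem_coe.1 hx)).2
    have hgt : ∀ y ∈ a, y < x := hgtall a b hse x hxb hxa
    obtain ⟨j, hj⟩ := hbM (Finset.mem_coe.2 hxb)
    have hkj : k + 1 ≤ j := by
      have : m k < m j := by rw [hj, hk]; exact hgt _ (a.max'_mem hane)
      have := hmlt.lt_iff_lt.1 this
      omega
    exact hmono2 (k+1) j hkj (hj ▸ hmemk j)
  haveI : Nonempty S := ⟨g ∅⟩
  choose! ι hι using hkey
  exact ⟨C, hCB, hCbarrier, ι, fun a ha b hb hse => hι a ha b hb hse⟩
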